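/- For every nonnegative integer n, every nonnegative integer r, and every real x, one has B_n^{(c,r)}(x) = ∑_{l=0}^{n} C(n,l) · B_{n-l}^{(c)}(x) · r^l. -/
import Mathlib


/-- The central factorial numbers of the second kind:
`T(n,k) = (1/k!) ∑_{j=0}^{k} (-1)^{k-j} C(k,j) (j - k/2)^n`. -/
noncomputable def centralT (n k : ℕ) : ℝ :=
  (1 / (Nat.factorial k : ℝ)) * ∑ j ∈ Finset.range (k + 1),
    (-1 : ℝ) ^ (k - j) * (Nat.choose k j : ℝ) * ((j : ℝ) - (k : ℝ) / 2) ^ n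

/-- The extended `r`-central factorial numbers of the second kind:
`T_r(n+r,k+r) = (1/k!) ∑_{j=0}^{k} (-1)^{k-j} C(k,j) (j + r - k/2)^n`. -/
noncomputable def rcentralT (r n k : ℕ) : ℝ :=
  (1 / (Nat.factorial k : ℝ)) * ∑ j ∈ Finset.range (k + 1),
    (-1 : ℝ) ^ (k - j) * (Nat.choose k j : ℝ) * ((j : ℝ) + (r : ℝ) - (k : ℝ) / 2) ^ n

/-- The central Bell polynomials: `B_n^{(c)}(x) = ∑_{k=0}^{n} T(n,k) x^k`. -/
noncomputable def centralBell (n : ℕ) (x : ℝ) : ℝ :=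
  ∑ k ∈ Finset.range (n + 1), centralT n k * x ^ k

/-- The extended `r`-central Bell polynomials: `B_n^{(c,r)}(x) = ∑_{k=0}^{n} T_r(n+r,k+r) x^k`. -/
noncomputable def rcentralBell (r n : ℕ) (x : ℝ) : ℝ :=
  ∑ k ∈ Finset.range (n + 1), rcentralT r n k * x ^ k

lemma iter_fwdDiff_pow_eq_zero : ∀ k m : ℕ, m < k →
    (fwdDiff (1:ℝ))^[k] (fun y : ℝ => y ^ m) = 0 := by
  intro k
  induction k with
  | zero => intro m hm; exact absurd hm (Nat.not_lt_zero m)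
  | succ k ih =>
    intro m hm
    rw [Function.iterate_succ_apply]
    have hΔ : fwdDiff (1:ℝ) (fun y : ℝ => y ^ m)
        = ∑ t ∈ Finset.range m, (m.choose t : ℝ) • (fun z : ℝ => z ^ t) := by
      funext y
      simp only [fwdDiff, Finset.sum_apply, Pi.smul_apply, smul_eq_mul]
      rw [add_pow, Finset.sum_range_succ]
      simp [mul_comm]
    rw [hΔ, fwdDiff_iter_finset_sum]
    refine Finset.sum_eq_zero fun t ht => ?_
    rw [fwdDiff_iter_const_smul,
      ih t (lt_of_lt_of_le (Finset.mem_range.mp ht) (Nat.lt_succ_iff.mp hm))]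
    simp

lemma alt_sum_pow_eq_zero (k m : ℕ) (hm : m < k) (c : ℝ) :
    ∑ j ∈ Finset.range (k + 1),
      (-1 : ℝ) ^ (k - j) * (Nat.choose k j : ℝ) * ((j : ℝ) + c) ^ m = 0 := by
  have h := fwdDiff_iter_eq_sum_shift (1 : ℝ) (fun y : ℝ => y ^ m) k c
  rw [iter_fwdDiff_pow_eq_zero k m hm] at h
  have h0 : (0 : ℝ) = ∑ j ∈ Finset.range (k + 1),
      ((-1 : ℤ) ^ (k - j) * (k.choose j : ℤ)) • (c + (j : ℕ) • (1:ℝ)) ^ m := h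
  calc ∑ j ∈ Finset.range (k + 1),
        (-1 : ℝ) ^ (k - j) * (Nat.choose k j : ℝ) * ((j : ℝ) + c) ^ m
      = ∑ j ∈ Finset.range (k + 1),
        ((-1 : ℤ) ^ (k - j) * (k.choose j : ℤ)) • (c + (j : ℕ) • (1:ℝ)) ^ m := by
        refine Finset.sum_congr rfl fun j _ => ?_
        push_cast [zsmul_eq_mul]
        ring
    _ = 0 := h0.symm

lemma centralT_eq_zero {n k : ℕ} (h : n < k) : centralT n k = 0 := by
  unfold centralT
  have : ∑ j ∈ Finset.range (k + 1),
      (-1 : ℝ) ^ (k - j) * (Nat.choose k j : ℝ) * ((j : ℝ) - (k : ℝ) / 2) ^ n = 0 := by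
    rw [← alt_sum_pow_eq_zero k n h (-(k : ℝ) / 2)]
    refine Finset.sum_congr rfl fun j _ => ?_
    ring_nf
  rw [this, mul_zero]

lemma rcentralT_eq (r n k : ℕ) :
    rcentralT r n k
      = ∑ l ∈ Finset.range (n + 1), (n.choose l : ℝ) * centralT (n - l) k * (r : ℝ) ^ l := by
  unfold rcentralT centralT
  have hpow : ∀ j : ℕ, ((j : ℝ) + r - (k : ℝ) / 2) ^ n
      = ∑ l ∈ Finset.range (n + 1),
          (r : ℝ) ^ l * ((j : ℝ) - (k : ℝ) / 2) ^ (n - l) * (n.choose l : ℝ) := by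
    intro j
    rw [show ((j : ℝ) + r - (k : ℝ) / 2) = (r : ℝ) + ((j : ℝ) - (k : ℝ) / 2) by ring, add_pow]
  simp_rw [hpow]
  simp only [Finset.mul_sum, Finset.sum_mul]
  rw [Finset.sum_comm]
  refine Finset.sum_congr rfl fun l _ => Finset.sum_congr rfl fun j _ => ?_
  ring

/-- For every nonnegative integer `n`, nonnegative integer `r` and real `x`:
`B_n^{(c,r)}(x) = ∑_{l=0}^{n} C(n,l) · B_{n-l}^{(c)}(x) · r^l`. -/
theorem rcentralBell_eq_sum_centralBell (n r : ℕ) (x : ℝ) :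
    rcentralBell r n x =
      ∑ l ∈ Finset.range (n + 1),
        (Nat.choose n l : ℝ) * centralBell (n - l) x * (r : ℝ) ^ l := by
  unfold rcentralBell
  simp_rw [rcentralT_eq, Finset.sum_mul]
  rw [Finset.sum_comm]
  refine Finset.sum_congr rfl fun l hl => ?_
  unfold centralBell
  have hsub : Finset.range (n - l + 1) ⊆ Finset.range (n + 1) :=
    Finset.range_subset_range.mpr (by omega)
  have hext : ∑ k ∈ Finset.range (n - l + 1), centralT (n - l) k * x ^ k
      = ∑ k ∈ Finset.range (n + 1), centralT (n - l) k * x ^ k := by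
    refine Finset.sum_subset hsub fun k _ hk => ?_
    rw [centralT_eq_zero (by simp at hk; omega), zero_mul]
  rw [hext]
  simp only [Finset.mul_sum, Finset.sum_mul]
  refine Finset.sum_congr rfl fun k _ => by ring
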